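/- Let f : K → X be a continuous irreducible surjection between compact Hausdorff spaces, and let B ⊆ K be a subset such that f⁻¹(f(b)) = {b} for every b ∈ B. Then the restriction f|_B : B → f(B) is an open map (where B and f(B) carry the subspace topologies), and hence is a homeomorphism of B onto f(B). -/

import Mathlib

universe u

open Set Topology

/-- The character of a space `X` at a point `x`: the least cardinality of a
neighborhood base of `X` at `x`. -/
noncomputable def nhdsChar (X : Type u) [TopologicalSpace X] (x : X) : Cardinal.{u} :=
  sInf { c | ∃ B : Set (Set X), Cardinal.mk B = c ∧ (∀ U ∈ B, U ∈ nhds x) ∧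
      ∀ V ∈ nhds x, ∃ U ∈ B, U ⊆ V }

/-- The character of a space: `χ(X) = sup_{x ∈ X} χ(x, X)`. -/
noncomputable def spaceChar (X : Type u) [TopologicalSpace X] : Cardinal.{u} :=
  ⨆ x : X, nhdsChar X x

/-- The cellularity of a space: the supremum of cardinalities of pairwise disjoint
families of nonempty open subsets. -/
noncomputable def cellularity (X : Type u) [TopologicalSpace X] : Cardinal.{u} :=
  sSup { c | ∃ 𝒰 : Set (Set X), Cardinal.mk 𝒰 = c ∧ (∀ U ∈ 𝒰, IsOpen U ∧ U.Nonempty) ∧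
      𝒰.PairwiseDisjoint id }

/-- The density of a space: the least cardinality of a dense subset. -/
noncomputable def density (X : Type u) [TopologicalSpace X] : Cardinal.{u} :=
  sInf { c | ∃ D : Set X, Cardinal.mk D = c ∧ Dense D }

/-- The weight of a space: the least cardinality of a base for the topology. -/
noncomputable def weight (X : Type u) [TopologicalSpace X] : Cardinal.{u} :=
  sInf { c | ∃ B : Set (Set X), Cardinal.mk B = c ∧ TopologicalSpace.IsTopologicalBasis B }

/-- A surjective map is irreducible if no proper closed subset maps onto the codomain. -/
def IsIrreducibleMap {K : Type*} {X : Type*} [TopologicalSpace K] [TopologicalSpace X]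
    (f : K → X) : Prop :=
  Function.Surjective f ∧ ∀ A : Set K, IsClosed A → A ≠ univ → f '' A ≠ univ

/-- `C` is an order component of `A`: a maximal convex subset of `A`. -/
def IsOrderComponent {K : Type*} [LinearOrder K] (A C : Set K) : Prop :=
  C ⊆ A ∧ C.OrdConnected ∧ ∀ C' : Set K, C ⊆ C' → C' ⊆ A → C'.OrdConnected → C' = C

/-- A map from a linearly ordered set is order-light if every order component of every
fiber is a singleton. -/
def OrderLight {K : Type*} {X : Type*} [LinearOrder K] (f : K → X) : Prop :=
  ∀ x : X, ∀ C : Set K, IsOrderComponent (f ⁻¹' {x}) C → ∃ k, C = {k}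

/-- The countable chain condition: every pairwise disjoint family of nonempty open sets
is countable. -/
def CCC (X : Type*) [TopologicalSpace X] : Prop :=
  ∀ 𝒰 : Set (Set X), (∀ U ∈ 𝒰, IsOpen U ∧ U.Nonempty) → 𝒰.PairwiseDisjoint id → 𝒰.Countable

/-- A space is non-archimedean if it has a base any two members of which are either
disjoint or comparable by inclusion. -/
def NonArchimedean (X : Type*) [TopologicalSpace X] : Prop :=
  ∃ B : Set (Set X), TopologicalSpace.IsTopologicalBasis B ∧
    ∀ U ∈ B, ∀ V ∈ B, Disjoint U V ∨ U ⊆ V ∨ V ⊆ U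

/-- A space is perfectly normal if it is normal and every closed set is a Gδ-set. -/
def PerfNormal (X : Type*) [TopologicalSpace X] : Prop :=
  NormalSpace X ∧ ∀ A : Set X, IsClosed A → IsGδ A

/-- `X` is a continuous image of some compact linearly ordered topological space
(a linearly ordered set equipped with its order topology). -/
def ContinuousImageOfCompactLOTS (X : Type u) [TopologicalSpace X] : Prop :=
  ∃ (K : Type u) (lo : LinearOrder K) (tK : TopologicalSpace K),
    letI := lo; letI := tK;
    OrderTopology K ∧ CompactSpace K ∧ ∃ f : K → X, Continuous f ∧ Function.Surjective f

/-- A closed set `A` is a strong T-set: the boundary of each connected component of the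
complement consists of exactly two points, and each such component is homeomorphic to the
open unit interval `(0,1)`. -/
def IsStrongTSet {Y : Type*} [TopologicalSpace Y] (A : Set Y) : Prop :=
  IsClosed A ∧ ∀ x ∈ Aᶜ,
    (∃ a b : Y, a ≠ b ∧ frontier (connectedComponentIn Aᶜ x) = {a, b}) ∧
    Nonempty (↥(connectedComponentIn Aᶜ x) ≃ₜ ↥(Ioo (0:ℝ) 1))

/-- Souslin's Hypothesis: every ccc LOTS is separable. -/
def SouslinHypothesis : Prop :=
  ∀ (L : Type u) (lo : LinearOrder L) (tL : TopologicalSpace L),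
    letI := lo; letI := tL;
    OrderTopology L → CCC L → TopologicalSpace.SeparableSpace L

theorem irreducible_restriction_open (K : Type*) (X : Type*) [TopologicalSpace K]
    [TopologicalSpace X] [CompactSpace K] [CompactSpace X] [T2Space K] [T2Space X]
    (f : K → X) (hf : Continuous f) (hirr : IsIrreducibleMap f)
    (B : Set K) (hB : ∀ b ∈ B, f ⁻¹' {f b} = {b}) :
    IsOpenMap (Set.imageFactorization f B) ∧ IsHomeomorph (Set.imageFactorization f B) := by
  have hcl : IsClosedMap f := hf.isClosedMap
  have hcont : Continuous (Set.imageFactorization f B) :=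
    Continuous.subtype_mk (hf.comp continuous_subtype_val) _
  have hinj : Function.Injective (Set.imageFactorization f B) := by
    refine Set.InjOn.imageFactorization_injective ?_
    intro a ha b hb hab
    have : b ∈ f ⁻¹' {f a} := by simp [hab]
    rw [hB a ha] at this
    exact this.symm
  have hopen : IsOpenMap (Set.imageFactorization f B) := by
    intro s hs
    rw [isOpen_induced_iff] at hs
    obtain ⟨U, hU, rfl⟩ := hs
    rw [isOpen_induced_iff]
    refine ⟨(f '' Uᶜ)ᶜ, (hcl _ hU.isClosed_compl).isOpen_compl, ?_⟩
    ext ⟨y, hy⟩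
    simp only [Set.mem_preimage, Set.mem_compl_iff, Set.mem_image]
    constructor
    · intro hyV
      obtain ⟨b, hbB, hfb⟩ := hy
      have hbU : b ∈ U := by
        by_contra hbU
        exact hyV ⟨b, hbU, hfb⟩
      exact ⟨⟨b, hbB⟩, hbU, Subtype.ext hfb⟩
    · rintro ⟨⟨b, hbB⟩, hbU, heq⟩
      have hfb : f b = y := congrArg Subtype.val heq
      rintro ⟨k, hkU, hfk⟩
      have : k ∈ f ⁻¹' {f b} := by simp [hfk, hfb]
      rw [hB b hbB] at this
      exact hkU (this ▸ hbU)
  exact ⟨hopen, ⟨hcont, hopen, hinj, Set.imageFactorization_surjective⟩⟩
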